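/- Let f : P → Q be a pure filtration map of finite posets and let Z be a closed subposet of Q. (a) If Z is of pure codimension one in Q, then f⁻¹(Z) is of pure codimension one in P. (b) If Z ⊆ f(P) and f⁻¹(Z) is of pure codimension one in P, then Z is of pure codimension one in Q. -/

import Mathlib

/-- `a` is a maximal element of the subposet `A`. -/
def IsMaxIn {P : Type*} [PartialOrder P] (A : Set P) (a : P) : Prop :=
  a ∈ A ∧ ∀ x ∈ A, a ≤ x → x = a

/-- `b` covers `a` within the subposet `A`: `a < b` and no element of `A` lies
strictly between them. -/
def CoversIn {P : Type*} [PartialOrder P] (A : Set P) (a b : P) : Prop :=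
  a ∈ A ∧ b ∈ A ∧ a < b ∧ ∀ x ∈ A, a < x → ¬x < b

/-- The subposet `A` is of codimension one in the subposet `B`: every maximal element
of `A` is covered (within `B`) by a maximal element of `B`. -/
def CodimOneIn {P : Type*} [PartialOrder P] (A B : Set P) : Prop :=
  ∀ a : P, IsMaxIn A a → ∃ b : P, IsMaxIn B b ∧ CoversIn B a b

/-- The subposet `A` is of pure codimension one in the subposet `B`: it is of
codimension one, and no maximal element of `A` is covered by a non-maximal element
of `B`. -/
def PureCodimOneIn {P : Type*} [PartialOrder P] (A B : Set P) : Prop :=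
  CodimOneIn A B ∧ ∀ a : P, IsMaxIn A a → ∀ b : P, CoversIn B a b → IsMaxIn B b

/-- `A` is a closed subposet of the subposet `B`. -/
def IsClosedSubposet {P : Type*} [PartialOrder P] (B A : Set P) : Prop :=
  A ⊆ B ∧ ∀ a ∈ A, ∀ x ∈ B, x ≤ a → x ∈ A

/-- A (sub)poset is constructible if either it has a greatest element, or it is a union
`Q ∪ R` of closed subposets such that `Q ∩ R` is of codimension one both in `Q` and in
`R`, and each of `Q`, `R` and `Q ∩ R` is constructible. -/
inductive PosetConstructible {P : Type*} [PartialOrder P] : Set P → Prop where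
  | cone {A : Set P} {g : P} (hg : g ∈ A) (hgreatest : ∀ x ∈ A, x ≤ g) :
      PosetConstructible A
  | step {Q R : Set P} (hQ : IsClosedSubposet (Q ∪ R) Q) (hR : IsClosedSubposet (Q ∪ R) R)
      (hcQ : CodimOneIn (Q ∩ R) Q) (hcR : CodimOneIn (Q ∩ R) R)
      (cQ : PosetConstructible Q) (cR : PosetConstructible R)
      (cQR : PosetConstructible (Q ∩ R)) : PosetConstructible (Q ∪ R)

/-- A monotone map `f : P → Q` is a filtration map if `f⁻¹(⌊q⌋ \ {q})` is of
codimension one in `f⁻¹(⌊q⌋)` for every `q`. -/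
def IsFiltrationMap {P Q : Type*} [PartialOrder P] [PartialOrder Q] (f : P → Q) : Prop :=
  ∀ q : Q, CodimOneIn (f ⁻¹' {y | y < q}) (f ⁻¹' {y | y ≤ q})

/-- A monotone map `f : P → Q` is a pure filtration map if `f⁻¹(⌊q⌋ \ {q})` is of
pure codimension one in `f⁻¹(⌊q⌋)` for every `q`. -/
def IsPureFiltrationMap {P Q : Type*} [PartialOrder P] [PartialOrder Q] (f : P → Q) :
    Prop :=
  ∀ q : Q, PureCodimOneIn (f ⁻¹' {y | y < q}) (f ⁻¹' {y | y ≤ q})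

/-- A monotone map is constructible if it is a filtration map and every `f⁻¹(⌊q⌋)` is
constructible. -/
def IsConstructibleMap {P Q : Type*} [PartialOrder P] [PartialOrder Q] (f : P → Q) :
    Prop :=
  IsFiltrationMap f ∧ ∀ q : Q, PosetConstructible (f ⁻¹' {y | y ≤ q})

/-- In a finite poset, above every element of `S` there is a maximal element of `S`. -/
lemma exists_isMaxIn_above {P : Type*} [PartialOrder P] [Finite P] (S : Set P) {p : P}
    (hp : p ∈ S) : ∃ a, p ≤ a ∧ IsMaxIn S a := by
  obtain ⟨a, ha, hmax⟩ := Set.Finite.exists_maximalFor id (S ∩ Set.Ici p)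
    (Set.toFinite _) ⟨p, hp, le_refl p⟩
  exact ⟨a, ha.2, ha.1, fun x hx hax => le_antisymm (hmax ⟨hx, le_trans ha.2 hax⟩ hax) hax⟩

/-- In a finite poset, whenever `a < b` there is a cover of `a` below `b`. -/
lemma exists_coversIn_univ_between {P : Type*} [PartialOrder P] [Finite P] {a b : P}
    (hab : a < b) : ∃ c, c ≤ b ∧ CoversIn Set.univ a c := by
  obtain ⟨c, hc, hmin⟩ := Set.Finite.exists_minimalFor id {x | a < x ∧ x ≤ b}
    (Set.toFinite _) ⟨b, hab, le_refl b⟩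
  exact ⟨c, hc.2, trivial, trivial, hc.1,
    fun x _ h1 h2 => h2.ne' (le_antisymm (hmin ⟨h1, le_trans h2.le hc.2⟩ h2.le) h2.le)⟩

/-- A pure filtration map sends maximal elements to maximal elements. -/
lemma isMaxIn_image_of_pureFiltration {P Q : Type*} [PartialOrder P] [PartialOrder Q]
    {f : P → Q} (hfil : IsPureFiltrationMap f) {p : P} (hp : IsMaxIn Set.univ p) :
    IsMaxIn (Set.univ : Set Q) (f p) := by
  refine ⟨trivial, fun t _ hle => ?_⟩
  by_contra hne
  have hlt : f p < t := hle.lt_of_ne (fun h => hne h.symm)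
  obtain ⟨b, _, hcov⟩ := (hfil t).1 p ⟨hlt, fun x _ hpx => hp.2 x trivial hpx⟩
  exact hcov.2.2.1.ne' (hp.2 b trivial hcov.2.2.1.le)

/-- Let `f : P → Q` be a pure filtration map and `Z` a closed subposet of `Q`.
(a) If `Z` is of pure codimension one in `Q`, then `f⁻¹(Z)` is of pure codimension one
in `P`. (b) If `Z ⊆ f(P)` and `f⁻¹(Z)` is of pure codimension one in `P`, then `Z` is
of pure codimension one in `Q`. -/
theorem pure_filtration_amalgamation {P Q : Type*} [PartialOrder P] [PartialOrder Q]
    [Finite P] [Finite Q] (f : P → Q) (hf : Monotone f)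
    (hfil : IsPureFiltrationMap f) (Z : Set Q) (hZ : IsClosedSubposet Set.univ Z) :
    (PureCodimOneIn Z Set.univ → PureCodimOneIn (f ⁻¹' Z) Set.univ) ∧
    (Z ⊆ Set.range f → PureCodimOneIn (f ⁻¹' Z) Set.univ →
      PureCodimOneIn Z Set.univ) := by
  have hZc : ∀ r ∈ Z, ∀ y : Q, y ≤ r → y ∈ Z := fun r hr y hy => hZ.2 r hr y trivial hy
  constructor
  · -- Part (a)
    intro hZp
    -- Claim 0: if a is maximal in f⁻¹(Z), then f a is maximal in Z.
    have claim0 : ∀ a : P, IsMaxIn (f ⁻¹' Z) a → IsMaxIn Z (f a) := by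
      intro a ha
      refine ⟨ha.1, fun r hr hqr => ?_⟩
      by_contra hne
      have hlt : f a < r := hqr.lt_of_ne (fun h => hne h.symm)
      have hamax : IsMaxIn (f ⁻¹' {y | y < r}) a :=
        ⟨hlt, fun x hx hax => ha.2 x (hZc r hr (f x) (le_of_lt hx)) hax⟩
      obtain ⟨b, _, hcov⟩ := (hfil r).1 a hamax
      exact hcov.2.2.1.ne' (ha.2 b (hZc r hr (f b) hcov.2.1) hcov.2.2.1.le)
    -- every element strictly above f a (a max in f⁻¹Z) is maximal in Q and covers f a
    have habove : ∀ a : P, IsMaxIn (f ⁻¹' Z) a → ∀ t : Q, f a < t →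
        IsMaxIn (Set.univ : Set Q) t ∧ CoversIn Set.univ (f a) t := by
      intro a ha t ht
      obtain ⟨s, hsb, hscov⟩ := exists_coversIn_univ_between ht
      have hsmax := hZp.2 (f a) (claim0 a ha) s hscov
      have hts : t = s := hsmax.2 t trivial hsb
      rw [hts]
      exact ⟨hsmax, hscov⟩
    -- Claim 1: every cover (in P) of a maximal element of f⁻¹Z is maximal in P
    have claim1 : ∀ a : P, IsMaxIn (f ⁻¹' Z) a → ∀ b : P, CoversIn Set.univ a b →
        IsMaxIn (Set.univ : Set P) b := by
      intro a ha b hb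
      have hab : a < b := hb.2.2.1
      have hfbZ : f b ∉ Z := fun h => hab.ne' (ha.2 b h hab.le)
      have hqfb : f a < f b := (hf hab.le).lt_of_ne (fun h => hfbZ (h ▸ ha.1))
      have hfbmaxQ := (habove a ha (f b) hqfb).1
      have hamax : IsMaxIn (f ⁻¹' {y | y < f b}) a := by
        refine ⟨hqfb, fun x hx hax => ?_⟩
        rcases eq_or_lt_of_le hax with h | h
        · exact h.symm
        rcases eq_or_lt_of_le (hf hax) with h2 | h2
        · exact ha.2 x (show f x ∈ Z from h2 ▸ ha.1) hax
        · exact absurd ((habove a ha (f x) h2).1.2 (f b) trivial (le_of_lt hx))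
            (ne_of_gt hx)
      have hbmax' := (hfil (f b)).2 a hamax b
        ⟨le_of_lt hqfb, le_refl (f b), hab, fun x _ h1 h2 => hb.2.2.2 x trivial h1 h2⟩
      refine ⟨trivial, fun x _ hbx => ?_⟩
      have hfx : f x = f b := hfbmaxQ.2 (f x) trivial (hf hbx)
      exact hbmax'.2 x (le_of_eq hfx) hbx
    constructor
    · -- codimension one
      intro a ha
      have hnotmax : ∃ x, a < x := by
        by_contra h
        push_neg at h
        obtain ⟨qs, _, hqscov⟩ := hZp.1 (f a) (claim0 a ha)
        have hamax : IsMaxIn (f ⁻¹' {y | y < qs}) a :=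
          ⟨hqscov.2.2.1, fun x _ hax =>
            ((eq_or_lt_of_le hax).elim (fun h' => h'.symm) (fun h' => absurd h' (h x)))⟩
        obtain ⟨b, _, hcov⟩ := (hfil qs).1 a hamax
        exact h b hcov.2.2.1
      obtain ⟨x, hx⟩ := hnotmax
      obtain ⟨c, _, hccov⟩ := exists_coversIn_univ_between hx
      exact ⟨c, claim1 a ha c hccov, hccov⟩
    · exact claim1
  · -- Part (b)
    intro hZr hpre
    have getA : ∀ q : Q, IsMaxIn Z q → ∃ a : P, f a = q ∧ IsMaxIn (f ⁻¹' Z) a := by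
      intro q hq
      obtain ⟨p0, hp0⟩ := hZr hq.1
      have hp0Z : p0 ∈ f ⁻¹' Z := by
        rw [Set.mem_preimage, hp0]; exact hq.1
      obtain ⟨a, hpa, hamax⟩ := exists_isMaxIn_above (f ⁻¹' Z) hp0Z
      exact ⟨a, hq.2 (f a) hamax.1 (hp0 ▸ hf hpa), hamax⟩
    -- Claim 2: any cover (in Q) of a maximal element of Z is maximal in Q
    have claim2 : ∀ q : Q, IsMaxIn Z q → ∀ s : Q, CoversIn Set.univ q s →
        IsMaxIn (Set.univ : Set Q) s := by
      intro q hq s hs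
      obtain ⟨a, hfa, hamax⟩ := getA q hq
      have hamax' : IsMaxIn (f ⁻¹' {y | y < s}) a := by
        refine ⟨show f a < s from hfa ▸ hs.2.2.1, fun x hx hax => ?_⟩
        rcases eq_or_lt_of_le hax with h | h
        · exact h.symm
        rcases eq_or_lt_of_le (show q ≤ f x from hfa ▸ hf hax) with h2 | h2
        · exact hamax.2 x (show f x ∈ Z from h2 ▸ hq.1) hax
        · exact absurd hx (hs.2.2.2 (f x) trivial h2)
      obtain ⟨c, _, hccov⟩ := (hfil s).1 a hamax'
      have hcovP : CoversIn Set.univ a c :=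
        ⟨trivial, trivial, hccov.2.2.1,
          fun x _ h1 h2 => hccov.2.2.2 x (le_trans (hf h2.le) hccov.2.1) h1 h2⟩
      have hcmaxP : IsMaxIn Set.univ c := hpre.2 a hamax c hcovP
      have hfcmax := isMaxIn_image_of_pureFiltration hfil hcmaxP
      have hqfc : q < f c := by
        rcases eq_or_lt_of_le (show q ≤ f c from hfa ▸ hf hccov.2.2.1.le) with h | h
        · exact absurd (hamax.2 c (show f c ∈ Z from h ▸ hq.1) hccov.2.2.1.le)
            hccov.2.2.1.ne'
        · exact h
      have hfcs : f c = s :=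
        (eq_or_lt_of_le hccov.2.1).resolve_right (fun h => hs.2.2.2 (f c) trivial hqfc h)
      exact hfcs ▸ hfcmax
    constructor
    · intro q hq
      obtain ⟨a, hfa, hamax⟩ := getA q hq
      obtain ⟨b, _, hbcov⟩ := hpre.1 a hamax
      have hfbZ : f b ∉ Z := fun h => hbcov.2.2.1.ne' (hamax.2 b h hbcov.2.2.1.le)
      have hq' : q < f b :=
        (show q ≤ f b from hfa ▸ hf hbcov.2.2.1.le).lt_of_ne (fun h => hfbZ (h ▸ hq.1))
      obtain ⟨s, _, hscov⟩ := exists_coversIn_univ_between hq'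
      exact ⟨s, claim2 q hq s hscov, hscov⟩
    · exact claim2
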